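/- (Two-step decrease of the norm.) Let 0 < a ≤ 1 and h > 0, and let (x_k, y_k) be gradient descent iterates on f_a with learning rate h. Suppose that at step k: −1 < r_k < 0, 0 < x_k y_k − 1 ≤ 1, and x_k² + y_k² ≤ 4/h. Then x_{k+2}² + y_{k+2}² ≤ x_k² + y_k² − 3.2 h (1 + r_k)(x_k y_k − 1). -/

import Mathlib

/-- `F_a(s) = C_a (log(e^{s-1}+1) + log(e^{1-s}+1))^a` with
`C_a = 1/(a 2^{a-2} (log 2)^{a-1})`, for `0 < a ≤ 1`. -/
noncomputable def Fa (a : ℝ) (s : ℝ) : ℝ :=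
  (1 / (a * (2 : ℝ) ^ (a - 2) * Real.log 2 ^ (a - 1))) *
    (Real.log (Real.exp (s - 1) + 1) + Real.log (Real.exp (1 - s) + 1)) ^ a

lemma Fa_hasDerivAt (a : ℝ) (s : ℝ) :
    HasDerivAt (Fa a)
      ((1 / (a * (2 : ℝ) ^ (a - 2) * Real.log 2 ^ (a - 1))) *
        ((Real.exp (s-1)/(Real.exp (s-1)+1) + (-Real.exp (1-s))/(Real.exp (1-s)+1)) * a *
          (Real.log (Real.exp (s-1) + 1) + Real.log (Real.exp (1-s) + 1)) ^ (a-1))) s := by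
  have h1 : HasDerivAt (fun t:ℝ => Real.exp (t-1) + 1) (Real.exp (s-1)) s :=
    by simpa using (((hasDerivAt_id s).sub_const 1).exp).add_const 1
  have h2 : HasDerivAt (fun t:ℝ => Real.exp (1-t) + 1) (-Real.exp (1-s)) s := by
    have h : HasDerivAt (fun t:ℝ => 1-t) (-1) s := by
      simpa using (hasDerivAt_id s).const_sub 1
    simpa [mul_comm] using (h.exp.add_const 1)
  have hpos1 : (0:ℝ) < Real.exp (s-1) + 1 := by positivity
  have hpos2 : (0:ℝ) < Real.exp (1-s) + 1 := by positivity
  have hg : HasDerivAt (fun t:ℝ => Real.log (Real.exp (t-1)+1) + Real.log (Real.exp (1-t)+1))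
      (Real.exp (s-1)/(Real.exp (s-1)+1) + (-Real.exp (1-s))/(Real.exp (1-s)+1)) s :=
    (h1.log hpos1.ne').add (h2.log hpos2.ne')
  have hGpos : 0 < Real.log (Real.exp (s-1)+1) + Real.log (Real.exp (1-s)+1) := by
    have l1 : 0 < Real.log (Real.exp (s-1)+1) :=
      Real.log_pos (by linarith [Real.exp_pos (s-1)])
    have l2 : 0 < Real.log (Real.exp (1-s)+1) :=
      Real.log_pos (by linarith [Real.exp_pos (1-s)])
    linarith
  exact (hg.rpow_const (Or.inl hGpos.ne')).const_mul _

lemma deriv_Fa (a : ℝ) (ha0 : 0 < a) (u : ℝ) :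
    deriv (Fa a) (1+u) = (1/((2:ℝ)^(a-2) * Real.log 2 ^ (a-1))) *
      (Real.log (Real.exp u + 1) + Real.log (Real.exp (-u) + 1)) ^ (a-1) *
      ((Real.exp u - 1)/(Real.exp u + 1)) := by
  have h := (Fa_hasDerivAt a (1+u)).deriv
  have e1 : (1+u) - 1 = u := by ring
  have e2 : 1 - (1+u) = -u := by ring
  rw [e1, e2] at h
  rw [h]
  have hE : Real.exp (-u) = (Real.exp u)⁻¹ := Real.exp_neg u
  have hE0 : (0:ℝ) < Real.exp u := Real.exp_pos u
  have hD : Real.exp u/(Real.exp u+1) + (-Real.exp (-u))/(Real.exp (-u)+1)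
      = (Real.exp u - 1)/(Real.exp u + 1) := by
    rw [hE]
    have h1 : Real.exp u + 1 ≠ 0 := by positivity
    have h2 : (Real.exp u)⁻¹ + 1 ≠ 0 := by positivity
    field_simp
    ring
  rw [hD]
  have hP : (0:ℝ) < (2:ℝ)^(a-2) * Real.log 2 ^ (a-1) := by
    have := Real.rpow_pos_of_pos (show (0:ℝ) < 2 by norm_num) (a-2)
    have := Real.rpow_pos_of_pos (Real.log_pos (by norm_num : (1:ℝ) < 2)) (a-1)
    positivity
  field_simp


lemma poly1 (u : ℝ) (h0 : 0 ≤ u) (h1 : u ≤ 1) :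
    0 ≤ 1/60*u^3 + 1/120*u^4 - 1/80*u^5 - 1/135*u^6 - 13/8640*u^7 - 1/1600*u^8 - 7/57600*u^9 := by
  have h3 : 0 ≤ u^3 := by positivity
  nlinarith [mul_nonneg h3 h0, mul_nonneg (mul_nonneg h3 h0) h0, pow_le_one₀ h0 h1 (n := 2),
    mul_nonneg h3 (sub_nonneg.2 h1), sq_nonneg (1-u), mul_nonneg (mul_nonneg h3 h3) h0,
    mul_nonneg h3 h3, pow_le_pow_of_le_one h0 h1 (show 5 ≤ 9 by norm_num),
    pow_le_pow_of_le_one h0 h1 (show 5 ≤ 6 by norm_num),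
    pow_le_pow_of_le_one h0 h1 (show 5 ≤ 7 by norm_num),
    pow_le_pow_of_le_one h0 h1 (show 5 ≤ 8 by norm_num)]

lemma poly2 (u : ℝ) (h0 : 0 ≤ u) (h1 : u ≤ 1) :
    0 ≤ 17/1500*u^3 - 233/3000*u^4 + 889/6250*u^5 + 19111/300000*u^6 + 4887/200000*u^7 + 1629/200000*u^8 := by
  have h3 : 0 ≤ u^3 := by positivity
  nlinarith [mul_nonneg h3 (sq_nonneg (u - 3/10)), mul_nonneg (mul_nonneg h3 h0) (sq_nonneg (u-3/10)),
    mul_nonneg (mul_nonneg h3 h0) h0, mul_nonneg h3 h0, mul_nonneg (mul_nonneg h3 h3) h0, mul_nonneg h3 h3]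

lemma exp_ub6 (u : ℝ) (h0 : 0 ≤ u) (h1 : u ≤ 1) :
    Real.exp u ≤ 1 + u + u^2/2 + u^3/6 + u^4/24 + u^5/120 + 7/4320*u^6 := by
  have h := Real.exp_bound' h0 h1 (show 0 < 6 by norm_num)
  simp only [Finset.sum_range_succ, Finset.sum_range_zero] at h
  norm_num [Nat.factorial] at h
  linarith

lemma exp_neg_ub6 (u : ℝ) (h0 : 0 ≤ u) (h1 : u ≤ 1) :
    Real.exp (-u) ≤ 1 - u + u^2/2 - u^3/6 + u^4/24 - u^5/120 + 7/4320*u^6 := by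
  have habs : |(-u)| ≤ 1 := by rw [abs_neg, abs_of_nonneg h0]; exact h1
  have h := Real.exp_bound habs (show 0 < 6 by norm_num)
  have h' := (abs_sub_le_iff.1 h).1
  rw [abs_neg, abs_of_nonneg h0] at h'
  simp only [Finset.sum_range_succ, Finset.sum_range_zero] at h'
  norm_num [Nat.factorial] at h'
  nlinarith [h']

lemma exp_lb4 (u : ℝ) (h0 : 0 ≤ u) : 1 + u + u^2/2 + u^3/6 ≤ Real.exp u := by
  have h := Real.sum_le_exp_of_nonneg h0 4
  simp only [Finset.sum_range_succ, Finset.sum_range_zero] at h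
  norm_num [Nat.factorial] at h
  linarith

lemma exp_lb3 (x : ℝ) (h0 : 0 ≤ x) : 1 + x + x^2/2 ≤ Real.exp x := by
  have h := Real.sum_le_exp_of_nonneg h0 3
  simp only [Finset.sum_range_succ, Finset.sum_range_zero] at h
  norm_num [Nat.factorial] at h
  linarith

lemma Ga_eq (u : ℝ) : Real.log (Real.exp u + 1) + Real.log (Real.exp (-u) + 1)
    = Real.log (2 + (Real.exp u + Real.exp (-u))) := by
  rw [← Real.log_mul (by positivity) (by positivity)]
  congr 1
  have h : Real.exp u * Real.exp (-u) = 1 := by rw [← Real.exp_add]; simp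
  linear_combination h

lemma log4_eq : Real.log 4 = 2 * Real.log 2 := by
  rw [show (4:ℝ) = 2^(2:ℕ) by norm_num, Real.log_pow]; push_cast; ring

lemma Ga_lb (u : ℝ) :
    2*Real.log 2 ≤ Real.log (Real.exp u + 1) + Real.log (Real.exp (-u) + 1) := by
  rw [Ga_eq]
  have h1 : u + 1 ≤ Real.exp u := Real.add_one_le_exp u
  have h2 : -u + 1 ≤ Real.exp (-u) := Real.add_one_le_exp (-u)
  have h4 : (4:ℝ) ≤ 2 + (Real.exp u + Real.exp (-u)) := by linarith
  calc 2*Real.log 2 = Real.log 4 := log4_eq.symm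
  _ ≤ _ := Real.log_le_log (by norm_num) h4

lemma Ga_ub (u : ℝ) (h0 : 0 ≤ u) (h1 : u ≤ 1) :
    Real.log (Real.exp u + 1) + Real.log (Real.exp (-u) + 1) ≤ 2*Real.log 2 + u^2/4 := by
  rw [Ga_eq]
  have key : 2 + (Real.exp u + Real.exp (-u)) ≤ 4 * Real.exp (u^2/4) := by
    have hq := exp_lb3 (u^2/4) (by positivity)
    have e1 := exp_ub6 u h0 h1
    have e2 := exp_neg_ub6 u h0 h1
    have hu6 : u^6 ≤ u^4 := pow_le_pow_of_le_one h0 h1 (by norm_num)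
    nlinarith
  calc Real.log (2 + (Real.exp u + Real.exp (-u)))
      ≤ Real.log (4 * Real.exp (u^2/4)) := Real.log_le_log (by positivity) key
  _ = 2*Real.log 2 + u^2/4 := by
      rw [Real.log_mul (by norm_num) (Real.exp_ne_zero _), Real.log_exp, log4_eq]

lemma tanh_ub (u : ℝ) (h0 : 0 ≤ u) (h1 : u ≤ 1) :
    2*(Real.exp u - 1) ≤ (u - 3/40*u^3)*(Real.exp u + 1) := by
  have e1 := exp_ub6 u h0 h1
  have hc1 : u - 3/40*u^3 ≤ 1 := by nlinarith
  have h2 : Real.exp u * (2 - (u - 3/40*u^3)) ≤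
      (1 + u + u^2/2 + u^3/6 + u^4/24 + u^5/120 + 7/4320*u^6) * (2 - (u - 3/40*u^3)) :=
    mul_le_mul_of_nonneg_right e1 (by linarith)
  have h3 : (1 + u + u^2/2 + u^3/6 + u^4/24 + u^5/120 + 7/4320*u^6) * (2 - (u - 3/40*u^3))
      ≤ 2 + (u - 3/40*u^3) := by nlinarith [poly1 u h0 h1]
  nlinarith [h2, h3]

lemma tanh_lb (u : ℝ) (h0 : 0 ≤ u) (h1 : u ≤ 1) :
    (u*(1 - 27/100*u^2)*(1 + 181/1000*u^2))*(Real.exp u + 1) ≤ 2*(Real.exp u - 1) := by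
  have e1 := exp_lb4 u h0
  have hc2 : u*(1 - 27/100*u^2)*(1 + 181/1000*u^2) ≤ 2 := by nlinarith [pow_nonneg h0 3, pow_nonneg h0 5]
  have h2 : (1 + u + u^2/2 + u^3/6) * (2 - u*(1 - 27/100*u^2)*(1 + 181/1000*u^2)) ≤
      Real.exp u * (2 - u*(1 - 27/100*u^2)*(1 + 181/1000*u^2)) :=
    mul_le_mul_of_nonneg_right e1 (by linarith)
  have h3 : 2 + u*(1 - 27/100*u^2)*(1 + 181/1000*u^2) ≤
      (1 + u + u^2/2 + u^3/6) * (2 - u*(1 - 27/100*u^2)*(1 + 181/1000*u^2)) := by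
    nlinarith [poly2 u h0 h1]
  nlinarith [h2, h3]

lemma derivFa_neg (a : ℝ) (ha0 : 0 < a) (u : ℝ) :
    deriv (Fa a) (1 + (-u)) = - deriv (Fa a) (1 + u) := by
  rw [deriv_Fa a ha0, deriv_Fa a ha0, neg_neg]
  rw [show Real.log (Real.exp (-u) + 1) + Real.log (Real.exp u + 1)
      = Real.log (Real.exp u + 1) + Real.log (Real.exp (-u) + 1) from add_comm _ _]
  have hE0 : (0:ℝ) < Real.exp u := Real.exp_pos u
  have hflip : (Real.exp (-u) - 1)/(Real.exp (-u) + 1)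
      = -((Real.exp u - 1)/(Real.exp u + 1)) := by
    rw [Real.exp_neg, ← neg_div, div_eq_div_iff (by positivity) (by positivity)]
    have hEE : (Real.exp u)⁻¹ * Real.exp u = 1 := inv_mul_cancel₀ hE0.ne'
    linear_combination (2:ℝ) * hEE
  rw [hflip]
  ring

set_option maxHeartbeats 1000000 in
lemma derivFa_bounds (a : ℝ) (ha0 : 0 < a) (ha1 : a ≤ 1) (u : ℝ)
    (hu0 : 0 < u) (hu1 : u ≤ 1) :
    u*(1 - 27/100*u^2) ≤ deriv (Fa a) (1+u) ∧ deriv (Fa a) (1+u) ≤ u*(1 - 3/40*u^2) := by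
  rw [deriv_Fa a ha0 u]
  have hL0 : 0 < Real.log 2 := Real.log_pos (by norm_num)
  have hLgt : (0.6931471803:ℝ) < Real.log 2 := Real.log_two_gt_d9
  set L := Real.log 2 with hLdef
  set g := Real.log (Real.exp u + 1) + Real.log (Real.exp (-u) + 1) with hgdef
  have hglb : 2*L ≤ g := Ga_lb u
  have hgub : g ≤ 2*L + u^2/4 := Ga_ub u hu0.le hu1
  have hgpos : 0 < g := by linarith
  set T := (Real.exp u - 1)/(Real.exp u + 1) with hTdef
  set K2 := (g/(2*L))^(a-1) with hK2def
  have hKg : (1/((2:ℝ)^(a-2) * L^(a-1))) * g^(a-1) * T = 2 * K2 * T := by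
    rw [hK2def, Real.div_rpow hgpos.le (by positivity), Real.mul_rpow (by norm_num) hL0.le]
    have h2 : (2:ℝ)^(a-1) = 2 * (2:ℝ)^(a-2) := by
      rw [show a-1 = 1+(a-2) by ring, Real.rpow_add (by norm_num), Real.rpow_one]
    rw [h2]
    have p1 : (0:ℝ) < (2:ℝ)^(a-2) := Real.rpow_pos_of_pos (by norm_num) _
    have p2 : (0:ℝ) < L^(a-1) := Real.rpow_pos_of_pos hL0 _
    field_simp
  rw [hKg]
  have hw1 : 1 ≤ g/(2*L) := (one_le_div (by positivity)).2 hglb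
  have hK2ub : K2 ≤ 1 := Real.rpow_le_one_of_one_le_of_nonpos hw1 (by linarith)
  have hK2lb : 2*L/g ≤ K2 := by
    have h := Real.rpow_le_rpow_of_exponent_le hw1 (show (-1:ℝ) ≤ a-1 by linarith)
    rw [Real.rpow_neg_one, inv_div] at h
    exact h
  have hE1 : 1 ≤ Real.exp u := by
    rw [show (1:ℝ) = Real.exp 0 from (Real.exp_zero).symm]
    exact Real.exp_le_exp.2 hu0.le
  have hEp : (0:ℝ) < Real.exp u + 1 := by positivity
  have hT0 : 0 ≤ T := div_nonneg (by linarith) hEp.le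
  have hTub : 2*T ≤ u - 3/40*u^3 := by
    rw [hTdef, show 2*((Real.exp u - 1)/(Real.exp u + 1))
        = 2*(Real.exp u - 1)/(Real.exp u + 1) from by ring, div_le_iff₀ hEp]
    nlinarith [tanh_ub u hu0.le hu1]
  have hTlb : u*(1 - 27/100*u^2)*(1 + 181/1000*u^2) ≤ 2*T := by
    rw [hTdef, show 2*((Real.exp u - 1)/(Real.exp u + 1))
        = 2*(Real.exp u - 1)/(Real.exp u + 1) from by ring, le_div_iff₀ hEp]
    exact tanh_lb u hu0.le hu1
  clear_value T K2 g L
  clear hKg hK2def hTdef hgdef hLdef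
  constructor
  · -- lower bound
    have hc0 : 0 ≤ u*(1-27/100*u^2) := by nlinarith
    have hgib : g ≤ 2*L*(1 + 181/1000*u^2) := by nlinarith [sq_nonneg u]
    have A1 : u*(1-27/100*u^2) * g ≤ u*(1-27/100*u^2) * (2*L*(1 + 181/1000*u^2)) :=
      mul_le_mul_of_nonneg_left hgib hc0
    have A2 : 2*L*(u*(1 - 27/100*u^2)*(1 + 181/1000*u^2)) ≤ 2*L*(2*T) :=
      mul_le_mul_of_nonneg_left hTlb (by positivity)
    have hchain : u*(1-27/100*u^2) ≤ 2*(2*L/g)*T := by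
      rw [show 2*(2*L/g)*T = (4*L*T)/g from by ring, le_div_iff₀ hgpos]
      nlinarith [A1, A2]
    have hstep : 2*(2*L/g)*T ≤ 2*K2*T := by
      have := mul_le_mul_of_nonneg_right hK2lb hT0
      nlinarith [this]
    linarith
  · -- upper bound
    have B0 : K2*T ≤ 1*T := mul_le_mul_of_nonneg_right hK2ub hT0
    have B1 : 2*(K2*T) ≤ 2*T := by linarith
    nlinarith [B1, hTub]


lemma pe0 (d : ℝ) (hd0 : 0 ≤ d) (hd1 : d ≤ 1) :
    0 ≤ 4/5 + 19/5*d - 52/25*d^2 - 189/100*d^3 + 243/100*d^4 - 2187/2500*d^6 + 19683/250000*d^8 := by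
  nlinarith [sq_nonneg (d^2-1), sq_nonneg (d-1), mul_nonneg hd0 (sub_nonneg.2 hd1), sq_nonneg d,
    sq_nonneg (d^3), sq_nonneg (d^4), mul_nonneg (mul_nonneg hd0 hd0) (sub_nonneg.2 hd1),
    sq_nonneg (d^2-d), sq_nonneg (d^3-d)]

lemma pe23 (d : ℝ) (hd0 : 0 ≤ d) (hd1 : d ≤ 1) :
    0 ≤ 4/15 + 13/5*d - 206/75*d^2 - 171/100*d^3 + 261/100*d^4 - 3/200*d^5 - 4449/5000*d^6 + 19683/250000*d^8 := by
  nlinarith [sq_nonneg (d^2-1), sq_nonneg (d-1), mul_nonneg hd0 (sub_nonneg.2 hd1), sq_nonneg d,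
    sq_nonneg (d^3), sq_nonneg (d^4), mul_nonneg (mul_nonneg hd0 hd0) (sub_nonneg.2 hd1),
    sq_nonneg (d^2-d), sq_nonneg (d^3-d)]

lemma pe34 (d : ℝ) (hd0 : 0 ≤ d) (hd1 : d ≤ 1) :
    0 ≤ 1/5 + 49/20*d - 551/200*d^2 - 129/80*d^3 + 1053/400*d^4 - 27/1600*d^5 - 35667/40000*d^6 + 19683/250000*d^8 := by
  nlinarith [sq_nonneg (d^2-1), sq_nonneg (d-1), mul_nonneg hd0 (sub_nonneg.2 hd1), sq_nonneg d,
    sq_nonneg (d^3), sq_nonneg (d^4), mul_nonneg (mul_nonneg hd0 hd0) (sub_nonneg.2 hd1),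
    sq_nonneg (d^2-d), sq_nonneg (d^3-d)]

lemma pe1 (d : ℝ) (hd0 : 0 ≤ d) (hd1 : d ≤ 1) :
    0 ≤ 2*d - 139/50*d^2 - 51/50*d^3 + 3*d^4 - 9/400*d^5 - 8973/10000*d^6 + 19683/250000*d^8 := by
  nlinarith [sq_nonneg (d^2-1), sq_nonneg (d-1), mul_nonneg hd0 (sub_nonneg.2 hd1), sq_nonneg d,
    sq_nonneg (d^3), sq_nonneg (d^4), mul_nonneg (mul_nonneg hd0 hd0) (sub_nonneg.2 hd1),
    sq_nonneg (d^2-d), sq_nonneg (d^3-d), mul_nonneg hd0 hd0]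

set_option maxHeartbeats 1000000 in
lemma keyPoly (d r : ℝ) (hd0 : 0 ≤ d) (hd1 : d ≤ 1) (hr0 : 0 ≤ r) (hr1 : r ≤ 1) :
    0 ≤ 4/5 - 4/5*r + 19/5*d - 9/5*d*r - 52/25*d^2 - d^2*r + 3/10*d^2*r^3
      - 189/100*d^3 + 27/100*d^3*r + 3/10*d^3*r^3 + 3/10*d^3*r^4
      + 243/100*d^4 + 27/100*d^4*r + 3/10*d^4*r^4 - 9/400*d^5*r^6
      - 2187/2500*d^6 - 9/400*d^6*r^6 + 19683/250000*d^8 := by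
  have e0 := pe0 d hd0 hd1
  have e23 := pe23 d hd0 hd1
  have e34 := pe34 d hd0 hd1
  have e1 := pe1 d hd0 hd1
  have s1 : 0 ≤ r^3 - (3*r - 2) := by nlinarith [sq_nonneg (r-1)]
  have s2 : 0 ≤ r^4 - (4*r - 3) := by nlinarith [sq_nonneg (r-1), sq_nonneg r]
  have s3 : 0 ≤ r - r^6 := by
    have h5 : r^5 ≤ 1 := pow_le_one₀ hr0 hr1
    nlinarith [pow_nonneg hr0 5]
  have d23 : (0:ℝ) ≤ d^2 + d^3 := by positivity
  have d34 : (0:ℝ) ≤ d^3 + d^4 := by positivity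
  have d56 : (0:ℝ) ≤ d^5 + d^6 := by positivity
  have t1 : 0 ≤ (d^2+d^3) * (r^3 - (3*r-2)) := mul_nonneg d23 s1
  have t1' : 0 ≤ (d^2+d^3) * r^3 := by positivity
  have t2 : 0 ≤ (d^3+d^4) * (r^4 - (4*r-3)) := mul_nonneg d34 s2
  have t2' : 0 ≤ (d^3+d^4) * r^4 := by positivity
  have t3 : 0 ≤ (d^5+d^6) * (r - r^6) := mul_nonneg d56 s3
  rcases le_total r (2/3) with hc | hc
  · have w1 : (0:ℝ) ≤ 1 - 3/2*r := by linarith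
    have w2 : (0:ℝ) ≤ 3/2*r := by linarith
    linarith [mul_nonneg w1 e0, mul_nonneg w2 e23, t1', t2', t3]
  · rcases le_total r (3/4) with hc2 | hc2
    · have w1 : (0:ℝ) ≤ 9 - 12*r := by linarith
      have w2 : (0:ℝ) ≤ 12*r - 8 := by linarith
      linarith [mul_nonneg w1 e23, mul_nonneg w2 e34, t1, t2', t3]
    · have w1 : (0:ℝ) ≤ 4 - 4*r := by linarith
      have w2 : (0:ℝ) ≤ 4*r - 3 := by linarith
      linarith [mul_nonneg w1 e34, mul_nonneg w2 e1, t1, t2, t3]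

set_option maxHeartbeats 1000000 in
lemma hI_lemma (δ ρ q M : ℝ)
    (hδ0 : 0 < δ) (hδ1 : δ ≤ 1) (hρ0 : 0 < ρ) (hρ1 : ρ < 1)
    (hq1 : 1 - 27/100*δ^2 ≤ q) (hq2 : q ≤ 1)
    (hMdef : M = ρ*δ*(1 - 3/40*(ρ*δ)^2)) :
    16/5*(1-ρ)*δ*(1+δ) + 4*(M*(1-ρ*δ) + M^2)*(1+δ)
      ≤ q*δ*(4*(1+δ)^2 - 4*q^2*δ^2 - (1+ρ)*δ*(1+δ)) := by
  have hδδ : δ^2 ≤ δ := by linarith [mul_nonneg hδ0.le (sub_nonneg.2 hδ1)]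
  have hq0 : 0 < q := by linarith
  have hkey := keyPoly δ ρ hδ0.le hδ1 hρ0.le hρ1.le
  have hid : (1-27/100*δ^2)*δ*(4*(1+δ)^2 - 4*(1-27/100*δ^2)^2*δ^2 - (1+ρ)*δ*(1+δ))
      - (16/5*(1-ρ)*δ*(1+δ) + 4*(M*(1-ρ*δ) + M^2)*(1+δ))
      = δ*(4/5 - 4/5*ρ + 19/5*δ - 9/5*δ*ρ - 52/25*δ^2 - δ^2*ρ + 3/10*δ^2*ρ^3
        - 189/100*δ^3 + 27/100*δ^3*ρ + 3/10*δ^3*ρ^3 + 3/10*δ^3*ρ^4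
        + 243/100*δ^4 + 27/100*δ^4*ρ + 3/10*δ^4*ρ^4 - 9/400*δ^5*ρ^6
        - 2187/2500*δ^6 - 9/400*δ^6*ρ^6 + 19683/250000*δ^8) := by
    rw [hMdef]; ring
  have hq01 : 0 ≤ 1-27/100*δ^2 := by linarith
  have hq02 : 1-27/100*δ^2 ≤ 1 := by nlinarith [sq_nonneg δ]
  have b1 : q*(1-27/100*δ^2) ≤ 1 := by
    have := mul_le_mul hq2 hq02 hq01 zero_le_one
    linarith
  have bq : q^2 ≤ 1 := by nlinarith [mul_nonneg hq0.le (sub_nonneg.2 hq2)]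
  have bq0 : (1-27/100*δ^2)^2 ≤ 1 := by nlinarith [mul_nonneg hq01 (sub_nonneg.2 hq02)]
  have h3q : q^2 + q*(1-27/100*δ^2) + (1-27/100*δ^2)^2 ≤ 3 := by
    linarith [b1, bq, bq0]
  have hbr : 0 ≤ 4*(1+δ)^2 - (1+ρ)*δ*(1+δ)
      - 4*δ^2*(q^2 + q*(1-27/100*δ^2) + (1-27/100*δ^2)^2) := by
    have u1 := mul_le_mul_of_nonneg_left h3q (show (0:ℝ) ≤ 4*δ^2 by positivity)
    have u2 := mul_nonneg (mul_nonneg (sub_nonneg.2 hρ1.le) hδ0.le)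
      (show (0:ℝ) ≤ 1+δ by linarith)
    nlinarith [u1, u2]
  have hmono : (1-27/100*δ^2)*δ*(4*(1+δ)^2 - 4*(1-27/100*δ^2)^2*δ^2 - (1+ρ)*δ*(1+δ))
      ≤ q*δ*(4*(1+δ)^2 - 4*q^2*δ^2 - (1+ρ)*δ*(1+δ)) := by
    have := mul_nonneg (mul_nonneg hδ0.le (sub_nonneg.2 hq1)) hbr
    linarith [this]
  have := mul_nonneg hδ0.le hkey
  linarith [hmono, hid, this]

set_option maxHeartbeats 1000000 in
lemma twoStep (δ ρ q m h N N1 : ℝ)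
    (hδ0 : 0 < δ) (hδ1 : δ ≤ 1) (hρ0 : 0 < ρ) (hρ1 : ρ < 1)
    (hq1 : 1 - 27/100*δ^2 ≤ q) (hq2 : q ≤ 1)
    (hm0 : 0 ≤ m) (hm1 : m ≤ ρ*δ*(1 - 3/40*(ρ*δ)^2))
    (hh : 0 < h) (hNlb : 2*(1+δ) ≤ N) (hNub : h*N ≤ 4)
    (hrel : h*q*(N - h*(q*δ)*(1+δ)) = 1 + ρ)
    (hN1eq : N1 = N - 4*h*(q*δ)*(1+δ) + h^2*(q*δ)^2*N)
    (hN10 : 0 ≤ N1) :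
    N1 + 4*h*m*(1-ρ*δ) + h^2*m^2*N1 ≤ N - 16/5*h*(1-ρ)*δ := by
  have hδδ : δ^2 ≤ δ := by linarith [mul_nonneg hδ0.le (sub_nonneg.2 hδ1)]
  have hq0 : 0 < q := by linarith
  have hh2 : h*(1+δ) ≤ 2 := by
    have := mul_le_mul_of_nonneg_left hNlb hh.le
    linarith
  obtain ⟨t, htdef⟩ : ∃ t : ℝ, t = h*(q*δ) := ⟨_, rfl⟩
  have ht0 : 0 < t := by rw [htdef]; positivity
  have ht2 : t*(1+δ) ≤ 2*(q*δ) := by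
    calc t*(1+δ) = (q*δ)*(h*(1+δ)) := by rw [htdef]; ring
    _ ≤ (q*δ)*2 := mul_le_mul_of_nonneg_left hh2 (by positivity)
    _ = 2*(q*δ) := by ring
  have ht1 : t ≤ 1 := by
    have h' : t*(1+δ) ≤ 1*(1+δ) := by
      have := mul_nonneg (sub_nonneg.2 hq2) hδ0.le
      linarith
    exact le_of_mul_le_mul_right h' (by linarith)
  have ht2' : t^2 ≤ 1 := by nlinarith [mul_nonneg ht0.le (sub_nonneg.2 ht1)]
  have htN : t*N = (1+ρ)*δ + t^2*(1+δ) := by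
    rw [htdef]; linear_combination δ * hrel
  have hN1eq' : N1 = N - 4*t*(1+δ) + t^2*N := by
    rw [htdef]; linear_combination hN1eq
  have hNN1 : N - N1 = t*((1+δ)*(4 - t^2) - (1+ρ)*δ) := by
    linear_combination (-1:ℝ)*hN1eq' + (-t)*htN
  have hNN2 : (N - N1)*(1+δ)
      = h*(q*δ)*(4*(1+δ)^2 - 4*q^2*δ^2 - (1+ρ)*δ*(1+δ))
        + t*(4*q^2*δ^2 - t^2*(1+δ)^2) := by
    rw [htdef] at hNN1 ⊢
    linear_combination (1+δ)*hNN1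
  obtain ⟨M, hMdef⟩ : ∃ M : ℝ, M = ρ*δ*(1 - 3/40*(ρ*δ)^2) := ⟨_, rfl⟩
  rw [← hMdef] at hm1
  have hρδ1 : ρ*δ ≤ 1 := by
    have := mul_nonneg (sub_nonneg.2 hρ1.le) hδ0.le
    linarith
  have hρδ0 : 0 < ρ*δ := by positivity
  have hψ0 : 0 ≤ 1 - 3/40*(ρ*δ)^2 := by
    linarith [mul_nonneg hρδ0.le (sub_nonneg.2 hρδ1)]
  have hM0 : 0 ≤ M := by rw [hMdef]; exact mul_nonneg hρδ0.le hψ0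
  have hX : 0 ≤ (1+δ)*(4 - t^2) - (1+ρ)*δ := by
    have u1 := mul_nonneg hδ0.le (sub_nonneg.2 ht2')
    have u2 := mul_nonneg (sub_nonneg.2 hρ1.le) hδ0.le
    linarith [u1, u2, ht2']
  have hN1N : N1 ≤ N := by
    have := mul_nonneg ht0.le hX
    linarith [hNN1, this]
  have hhN1 : h*N1 ≤ 4 := by
    have := mul_le_mul_of_nonneg_left hN1N hh.le
    linarith
  have k1 : h^2*m^2*N1 ≤ 4*(h*m^2) := by
    have := mul_le_mul_of_nonneg_left hhN1 (show (0:ℝ) ≤ h*m^2 by positivity)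
    linarith [this]
  have k2 : m*(1-ρ*δ) + m^2 ≤ M*(1-ρ*δ) + M^2 := by
    have u1 := mul_nonneg (sub_nonneg.2 hm1) (show (0:ℝ) ≤ 1-ρ*δ by linarith)
    have u2 := mul_nonneg (show (0:ℝ) ≤ M+m by linarith) (sub_nonneg.2 hm1)
    linarith [u1, u2]
  have hQ : 4*h*m*(1-ρ*δ) + h^2*m^2*N1 ≤ 4*h*(M*(1-ρ*δ) + M^2) := by
    have := mul_le_mul_of_nonneg_left k2 (show (0:ℝ) ≤ 4*h by linarith)
    linarith [this, k1]
  have hI := hI_lemma δ ρ q M hδ0 hδ1 hρ0 hρ1 hq1 hq2 hMdef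
  have e1 : 0 ≤ 4*q^2*δ^2 - t^2*(1+δ)^2 := by
    have := mul_nonneg (sub_nonneg.2 ht2) (show (0:ℝ) ≤ 2*(q*δ) + t*(1+δ) by positivity)
    linarith [this]
  have A := mul_le_mul_of_nonneg_left hI hh.le
  have B : 0 ≤ t*(4*q^2*δ^2 - t^2*(1+δ)^2) := mul_nonneg ht0.le e1
  have hQ2 := mul_le_mul_of_nonneg_right hQ (show (0:ℝ) ≤ 1+δ by linarith)
  have hfinal : (N1 + 4*h*m*(1-ρ*δ) + h^2*m^2*N1)*(1+δ) ≤ (N - 16/5*h*(1-ρ)*δ)*(1+δ) := by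
    linarith [A, B, hQ2, hNN2]
  exact le_of_mul_le_mul_right hfinal (by linarith)

set_option maxHeartbeats 2000000 in
/-- Two-step decrease of the squared norm along GD for `f_a`, when
`-1 < r_k < 0`, `0 < x_k y_k - 1 ≤ 1` and `x_k² + y_k² ≤ 4/h`. -/
theorem stmt_18 (a : ℝ) (ha0 : 0 < a) (ha1 : a ≤ 1) (h : ℝ) (hh : 0 < h)
    (x y : ℕ → ℝ)
    (hGD : ∀ n, x (n + 1) = x n - h * deriv (Fa a) (x n * y n) * y n ∧
                y (n + 1) = y n - h * deriv (Fa a) (x n * y n) * x n)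
    (k : ℕ) (ℓk qk rk : ℝ)
    (hℓ : ℓk = deriv (Fa a) (x k * y k))
    (hq : qk = ℓk / (x k * y k - 1))
    (hr : rk = 1 - h * qk * ((x k ^ 2 + y k ^ 2) - h * ℓk * (x k * y k)))
    (hr1 : -1 < rk) (hr2 : rk < 0)
    (hδ1 : 0 < x k * y k - 1) (hδ2 : x k * y k - 1 ≤ 1)
    (hnorm : x k ^ 2 + y k ^ 2 ≤ 4 / h) :
    x (k + 2) ^ 2 + y (k + 2) ^ 2 ≤
      x k ^ 2 + y k ^ 2 - 3.2 * h * (1 + rk) * (x k * y k - 1) := by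
  obtain ⟨hx1, hy1⟩ := hGD k
  obtain ⟨hx2, hy2⟩ := hGD (k+1)
  have hqδ : qk * (x k * y k - 1) = ℓk := by
    rw [hq]; field_simp
  have hDb := derivFa_bounds a ha0 ha1 (x k * y k - 1) hδ1 hδ2
  rw [show 1 + (x k * y k - 1) = x k * y k from by ring, ← hℓ] at hDb
  have hδ3 : (x k * y k - 1)^2 ≤ 1 := by nlinarith
  have hq2' : qk ≤ 1 := by
    have h2 : qk * (x k * y k - 1) ≤ 1 * (x k * y k - 1) := by
      have hc : (0:ℝ) ≤ 3/40*(x k * y k - 1)^3 := by positivity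
      nlinarith [hDb.2, hqδ]
    exact le_of_mul_le_mul_right h2 hδ1
  have hq1' : 1 - 27/100*(x k * y k - 1)^2 ≤ qk := by
    have h1 : (1 - 27/100*(x k * y k - 1)^2) * (x k * y k - 1)
        ≤ qk * (x k * y k - 1) := by nlinarith [hDb.1, hqδ]
    exact le_of_mul_le_mul_right h1 hδ1
  obtain ⟨d, hd⟩ : ∃ d : ℝ, d = x k * y k - 1 := ⟨_, rfl⟩
  obtain ⟨p, hp⟩ : ∃ p : ℝ, p = -rk := ⟨_, rfl⟩
  have hrkδ : rk * (x k * y k - 1) = (x k * y k - 1)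
      - h*ℓk*((x k ^ 2 + y k ^ 2) - h*ℓk*(x k * y k)) := by
    rw [hr]
    linear_combination (-(h*((x k ^ 2 + y k ^ 2) - h*ℓk*(x k * y k)))) * hqδ
  have hp1 : x (k+1) * y (k+1) = 1 + rk * (x k * y k - 1) := by
    rw [hx1, hy1, ← hℓ, hrkδ]; ring
  have hp1' : x (k+1) * y (k+1) = 1 + -(p*d) := by
    rw [hp1, hp, hd]; ring
  have hu0 : 0 < p*d := by
    rw [hp, hd]; exact mul_pos (by linarith) hδ1
  have hu1 : p*d ≤ 1 := by
    rw [hp, hd]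
    nlinarith [mul_nonneg (show (0:ℝ) ≤ 1 + rk by linarith) hδ1.le]
  have hDb2 := derivFa_bounds a ha0 ha1 (p*d) hu0 hu1
  obtain ⟨m, hm⟩ : ∃ m : ℝ, m = deriv (Fa a) (1 + p*d) := ⟨_, rfl⟩
  have hd1 : deriv (Fa a) (x (k+1) * y (k+1)) = -m := by
    rw [hp1', derivFa_neg a ha0 (p*d), hm]
  have hm0 : 0 ≤ m := by
    rw [hm]
    have hpd2 : (p*d)^2 ≤ 1 := by nlinarith
    nlinarith [hDb2.1, hu0.le]
  have hm1 : m ≤ p*d*(1 - 3/40*(p*d)^2) := by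
    rw [hm]; exact hDb2.2
  have hNlb : 2*(1+d) ≤ x k ^ 2 + y k ^ 2 := by
    rw [hd]; nlinarith [sq_nonneg (x k - y k)]
  have hNub : h*(x k ^ 2 + y k ^ 2) ≤ 4 := by
    rw [le_div_iff₀ hh] at hnorm; linarith
  have hrel : h*qk*((x k ^ 2 + y k ^ 2) - h*(qk*d)*(1+d)) = 1 + p := by
    rw [hp, hd, hr]
    linear_combination (-(h^2*qk*(x k * y k))) * hqδ
  have hN1eq : x (k+1) ^ 2 + y (k+1) ^ 2 = (x k ^ 2 + y k ^ 2)
      - 4*h*(qk*d)*(1+d) + h^2*(qk*d)^2*(x k ^ 2 + y k ^ 2) := by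
    rw [hd, hx1, hy1, ← hℓ]
    linear_combination (4*h*(x k * y k)
      - h^2*(x k ^ 2 + y k ^ 2)*(ℓk + qk*(x k * y k - 1))) * hqδ
  have hN10 : (0:ℝ) ≤ x (k+1) ^ 2 + y (k+1) ^ 2 := by positivity
  have hd0 : 0 < d := by rw [hd]; exact hδ1
  have hd1' : d ≤ 1 := by rw [hd]; exact hδ2
  have hp0 : 0 < p := by rw [hp]; linarith
  have hp1'' : p < 1 := by rw [hp]; linarith
  have hq1d : 1 - 27/100*d^2 ≤ qk := by rw [hd]; exact hq1'
  have main := twoStep d p qk m h (x k ^ 2 + y k ^ 2) (x (k+1) ^ 2 + y (k+1) ^ 2)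
    hd0 hd1' hp0 hp1'' hq1d hq2' hm0 hm1 hh hNlb hNub hrel hN1eq hN10
  have hgoalL : x (k + 2) ^ 2 + y (k + 2) ^ 2
      = (x (k+1) ^ 2 + y (k+1) ^ 2) + 4*h*m*(1-p*d)
        + h^2*m^2*(x (k+1) ^ 2 + y (k+1) ^ 2) := by
    rw [show k+2 = (k+1)+1 from rfl, hx2, hy2, hd1]
    linear_combination (4*h*m) * hp1'
  have hgoalR : x k ^ 2 + y k ^ 2 - 3.2*h*(1+rk)*(x k * y k - 1)
      = x k ^ 2 + y k ^ 2 - 16/5*h*(1-p)*d := by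
    rw [hp, hd]; norm_num
  rw [hgoalL, hgoalR]
  exact main
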